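/- Let X₀ ∈ ℝ^{n×n} have pairwise distinct singular values and let Y₀ = (V₀, U₀, Λ₀) be any SVD of X₀ (X₀ = V₀ diag(Λ₀) U₀^*, V₀, U₀ orthogonal). Define ψ(X, (V,U,Λ)) = (X − V diag(Λ) U^*, V^*V − Id, U^*U − Id). Then the partial differential ∂₂ψ(X₀, Y₀) is invertible on the subspace ℝ^{n×n} × {0} × {0}, and for z = (z₁, 0, 0) its inverse is (∂₂ψ(X₀,Y₀))^{-1}[z] = ( V₀ ι_V, U₀ ι_U, −diag(V₀^* z₁ U₀) ), where ι_V, ι_U are the unique antisymmetric matrices with, for i ≠ j, ((ι_V)_{i,j}, (ι_U)_{i,j}) the solution of the system [[(Λ₀)_j, −(Λ₀)_i], [−(Λ₀)_i, (Λ₀)_j]] ((ι_V)_{i,j}, (ι_U)_{i,j})^T = (−(z̄₁)_{i,j}, −(z̄₁)_{j,i})^T, with z̄₁ = V₀^* z₁ U₀. -/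

import Mathlib

open Matrix

attribute [local instance] Matrix.normedAddCommGroup Matrix.normedSpace


variable {n : ℕ}
abbrev M (n : ℕ) := Matrix (Fin n) (Fin n) ℝ

noncomputable def mulCLM (n : ℕ) : M n →L[ℝ] M n →L[ℝ] M n :=
  LinearMap.toContinuousLinearMap
    ((LinearMap.toContinuousLinearMap :
        (M n →ₗ[ℝ] M n) ≃ₗ[ℝ] (M n →L[ℝ] M n)).toLinearMap.comp (LinearMap.mul ℝ (M n)))

@[simp] lemma mulCLM_apply (A B : M n) : mulCLM n A B = A * B := rfl

noncomputable def tCLM (n : ℕ) : M n →L[ℝ] M n :=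
  LinearMap.toContinuousLinearMap
    { toFun := fun A => Aᵀ, map_add' := by intros; ext; simp, map_smul' := by intros; ext; simp }

@[simp] lemma tCLM_apply (A : M n) : tCLM n A = Aᵀ := rfl

noncomputable def dCLM (n : ℕ) : (Fin n → ℝ) →L[ℝ] M n :=
  LinearMap.toContinuousLinearMap
    { toFun := fun v => Matrix.diagonal v, map_add' := by intros; simp [Matrix.diagonal_add],
      map_smul' := by intros; simp [Matrix.diagonal_smul] }

@[simp] lemma dCLM_apply (v : Fin n → ℝ) : dCLM n v = Matrix.diagonal v := rfl

theorem HasFDerivAt.matmul {E : Type*} [NormedAddCommGroup E] [NormedSpace ℝ E]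
    {f g : E → M n} {f' g' : E →L[ℝ] M n} {x : E}
    (hf : HasFDerivAt f f' x) (hg : HasFDerivAt g g' x) :
    HasFDerivAt (fun y => f y * g y)
      ((mulCLM n (f x)).comp g' + id (α := E →L[ℝ] M n) (((mulCLM n).flip (g x)).comp f')) x := by
  have h := ((mulCLM n).isBoundedBilinearMap.hasFDerivAt (f x, g x)).comp x (hf.prodMk hg)
  convert h using 1
  all_goals rfl


/-- The map `ψ(X, (V, U, Λ)) = (X − V diag(Λ) Uᵀ, VᵀV − Id, UᵀU − Id)` whose zeros
encode SVDs of `X`. -/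
noncomputable def psiSVD {n : ℕ} (X : Matrix (Fin n) (Fin n) ℝ)
    (Y : Matrix (Fin n) (Fin n) ℝ × Matrix (Fin n) (Fin n) ℝ × (Fin n → ℝ)) :
    Matrix (Fin n) (Fin n) ℝ × Matrix (Fin n) (Fin n) ℝ × Matrix (Fin n) (Fin n) ℝ :=
  (X - Y.1 * Matrix.diagonal Y.2.2 * Y.2.1ᵀ, Y.1ᵀ * Y.1 - 1, Y.2.1ᵀ * Y.2.1 - 1)


lemma fderiv_psiSVD_apply (X₀ V₀ U₀ : M n) (Λ₀ : Fin n → ℝ)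
    (ζ : M n × M n × (Fin n → ℝ)) :
    fderiv ℝ (psiSVD X₀) (V₀, U₀, Λ₀) ζ =
      (-(ζ.1 * Matrix.diagonal Λ₀ * U₀ᵀ + V₀ * Matrix.diagonal ζ.2.2 * U₀ᵀ
          + V₀ * Matrix.diagonal Λ₀ * ζ.2.1ᵀ),
       ζ.1ᵀ * V₀ + V₀ᵀ * ζ.1, ζ.2.1ᵀ * U₀ + U₀ᵀ * ζ.2.1) := by
  set Y₀ : M n × M n × (Fin n → ℝ) := (V₀, U₀, Λ₀) with hY₀
  have p1 : HasFDerivAt (fun Y : M n × M n × (Fin n → ℝ) => Y.1) (ContinuousLinearMap.fst ℝ _ _) Y₀ :=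
    hasFDerivAt_fst
  have p2 := (hasFDerivAt_snd : HasFDerivAt _ (ContinuousLinearMap.snd ℝ (M n) (M n × (Fin n → ℝ))) Y₀).fst
  have p3 := (hasFDerivAt_snd : HasFDerivAt _ (ContinuousLinearMap.snd ℝ (M n) (M n × (Fin n → ℝ))) Y₀).snd
  have pd := ((dCLM n).hasFDerivAt (x := Y₀.2.2)).comp Y₀ p3
  have pt2 := ((tCLM n).hasFDerivAt (x := Y₀.2.1)).comp Y₀ p2
  have pt1 := ((tCLM n).hasFDerivAt (x := Y₀.1)).comp Y₀ p1
  have h1b := HasFDerivAt.matmul (HasFDerivAt.matmul p1 pd) pt2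
  have h1 := (hasFDerivAt_const X₀ Y₀).sub h1b
  have h2 := (HasFDerivAt.matmul pt1 p1).sub_const (1 : M n)
  have h3 := (HasFDerivAt.matmul pt2 p2).sub_const (1 : M n)
  have hψ := h1.prodMk (h2.prodMk h3)
  have hψ' : HasFDerivAt (psiSVD X₀) _ Y₀ := hψ
  rw [hψ'.fderiv]
  erw [ContinuousLinearMap.prod_apply, ContinuousLinearMap.prod_apply]
  simp [hY₀, Matrix.mul_assoc, id]
  refine ⟨?_, ?_, ?_⟩
  · show (0 : M n) - (V₀ * diagonal Λ₀ * ζ.2.1ᵀ + (V₀ * diagonal ζ.2.2 + ζ.1 * diagonal Λ₀) * U₀ᵀ) = _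
    noncomm_ring
  · show V₀ᵀ * ζ.1 + ζ.1ᵀ * V₀ = _
    abel
  · show U₀ᵀ * ζ.2.1 + ζ.2.1ᵀ * U₀ = _
    abel

section main
variable {n : ℕ} (X₀ V₀ : M n) (Λ₀ : Fin n → ℝ) (U₀ : M n)

lemma forward_calc
    (hV : V₀ᵀ * V₀ = 1 ∧ V₀ * V₀ᵀ = 1) (hU : U₀ᵀ * U₀ = 1 ∧ U₀ * U₀ᵀ = 1)
    (z₁ ιV ιU : M n) (hιV : ιVᵀ = -ιV) (hιU : ιUᵀ = -ιU)
    (hsys : ∀ i j : Fin n, i ≠ j →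
      Λ₀ j * ιV i j - Λ₀ i * ιU i j = -((V₀ᵀ * z₁ * U₀) i j) ∧
      -(Λ₀ i) * ιV i j + Λ₀ j * ιU i j = -((V₀ᵀ * z₁ * U₀) j i)) :
    fderiv ℝ (psiSVD X₀) (V₀, U₀, Λ₀)
      (V₀ * ιV, U₀ * ιU, fun i => -((V₀ᵀ * z₁ * U₀) i i)) = (z₁, 0, 0) := by
  rw [fderiv_psiSVD_apply]
  set z := V₀ᵀ * z₁ * U₀ with hz
  set μ : Fin n → ℝ := fun i => -(z i i) with hμ
  have hιV0 : ∀ i, ιV i i = 0 := by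
    intro i
    have := congrFun (congrFun hιV i) i
    simp [Matrix.transpose_apply] at this
    linarith
  have hιU0 : ∀ i, ιU i i = 0 := by
    intro i
    have := congrFun (congrFun hιU i) i
    simp [Matrix.transpose_apply] at this
    linarith
  have hE : ιV * Matrix.diagonal Λ₀ + Matrix.diagonal μ + Matrix.diagonal Λ₀ * ιUᵀ = -z := by
    ext i j
    rcases eq_or_ne i j with rfl | hij
    · simp [Matrix.mul_diagonal, Matrix.diagonal_mul, hιV0, hιU0, hμ]
    · have h := (hsys i j hij).1
      simp [Matrix.mul_diagonal, Matrix.diagonal_mul, Matrix.diagonal_apply_ne _ hij, hιU,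
        Matrix.transpose_apply]
      linarith
  have hfac : (V₀ * ιV) * Matrix.diagonal Λ₀ * U₀ᵀ + V₀ * Matrix.diagonal μ * U₀ᵀ
      + V₀ * Matrix.diagonal Λ₀ * (U₀ * ιU)ᵀ
      = V₀ * (ιV * Matrix.diagonal Λ₀ + Matrix.diagonal μ + Matrix.diagonal Λ₀ * ιUᵀ) * U₀ᵀ := by
    rw [Matrix.transpose_mul]
    noncomm_ring
  refine Prod.ext ?_ (Prod.ext ?_ ?_)
  · show -((V₀ * ιV) * Matrix.diagonal Λ₀ * U₀ᵀ + V₀ * Matrix.diagonal μ * U₀ᵀ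
      + V₀ * Matrix.diagonal Λ₀ * (U₀ * ιU)ᵀ) = z₁
    rw [hfac, hE]
    rw [Matrix.mul_neg, Matrix.neg_mul, neg_neg, hz]
    calc V₀ * (V₀ᵀ * z₁ * U₀) * U₀ᵀ = V₀ * V₀ᵀ * z₁ * (U₀ * U₀ᵀ) := by
          simp only [Matrix.mul_assoc]
      _ = z₁ := by rw [hV.2, hU.2, Matrix.one_mul, Matrix.mul_one]
  · show (V₀ * ιV)ᵀ * V₀ + V₀ᵀ * (V₀ * ιV) = 0
    rw [Matrix.transpose_mul, Matrix.mul_assoc, hV.1, ← Matrix.mul_assoc, hV.1,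
      Matrix.mul_one, Matrix.one_mul, hιV]
    simp
  · show (U₀ * ιU)ᵀ * U₀ + U₀ᵀ * (U₀ * ιU) = 0
    rw [Matrix.transpose_mul, Matrix.mul_assoc, hU.1, ← Matrix.mul_assoc, hU.1,
      Matrix.mul_one, Matrix.one_mul, hιU]
    simp

end main

section ker
variable {n : ℕ} (X₀ V₀ : M n) (Λ₀ : Fin n → ℝ) (U₀ : M n)

lemma ker_triv
    (hV : V₀ᵀ * V₀ = 1 ∧ V₀ * V₀ᵀ = 1) (hU : U₀ᵀ * U₀ = 1 ∧ U₀ * U₀ᵀ = 1)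
    (hΛ : ∀ i, 0 ≤ Λ₀ i) (hdist : ∀ i j : Fin n, i ≠ j → Λ₀ i ≠ Λ₀ j)
    (η : M n × M n × (Fin n → ℝ))
    (h : fderiv ℝ (psiSVD X₀) (V₀, U₀, Λ₀) η = 0) :
    η = 0 := by
  obtain ⟨A, B, μ⟩ := η
  rw [fderiv_psiSVD_apply] at h
  have h1 : A * Matrix.diagonal Λ₀ * U₀ᵀ + V₀ * Matrix.diagonal μ * U₀ᵀ
      + V₀ * Matrix.diagonal Λ₀ * Bᵀ = 0 := by
    have h' := congrArg Prod.fst h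
    simp [neg_eq_zero] at h'
    have := congrArg Neg.neg h'
    simp at this
    linear_combination (norm := abel) this
  have h2 : Aᵀ * V₀ + V₀ᵀ * A = 0 := congrArg (fun p => p.2.1) h
  have h3 : Bᵀ * U₀ + U₀ᵀ * B = 0 := congrArg (fun p => p.2.2) h
  set α := V₀ᵀ * A with hαdef
  set β := U₀ᵀ * B with hβdef
  have hA : A = V₀ * α := by
    rw [hαdef, ← Matrix.mul_assoc, hV.2, Matrix.one_mul]
  have hB : B = U₀ * β := by
    rw [hβdef, ← Matrix.mul_assoc, hU.2, Matrix.one_mul]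
  have hα : αᵀ = -α := by
    have : Aᵀ * V₀ = -(V₀ᵀ * A) := by
      rw [eq_neg_iff_add_eq_zero]; exact h2
    rw [hαdef, Matrix.transpose_mul, Matrix.transpose_transpose, this]
  have hβ : βᵀ = -β := by
    have : Bᵀ * U₀ = -(U₀ᵀ * B) := by
      rw [eq_neg_iff_add_eq_zero]; exact h3
    rw [hβdef, Matrix.transpose_mul, Matrix.transpose_transpose, this]
  have hfac : A * Matrix.diagonal Λ₀ * U₀ᵀ + V₀ * Matrix.diagonal μ * U₀ᵀ
      + V₀ * Matrix.diagonal Λ₀ * Bᵀ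
      = V₀ * (α * Matrix.diagonal Λ₀ + Matrix.diagonal μ + Matrix.diagonal Λ₀ * βᵀ) * U₀ᵀ := by
    rw [hA, hB, Matrix.transpose_mul]
    noncomm_ring
  have key : α * Matrix.diagonal Λ₀ + Matrix.diagonal μ + Matrix.diagonal Λ₀ * βᵀ = 0 := by
    have h0 : V₀ * (α * Matrix.diagonal Λ₀ + Matrix.diagonal μ + Matrix.diagonal Λ₀ * βᵀ) * U₀ᵀ
        = 0 := by rw [← hfac]; exact h1
    calc α * Matrix.diagonal Λ₀ + Matrix.diagonal μ + Matrix.diagonal Λ₀ * βᵀ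
        = V₀ᵀ * (V₀ * (α * Matrix.diagonal Λ₀ + Matrix.diagonal μ + Matrix.diagonal Λ₀ * βᵀ) * U₀ᵀ) * U₀ := by
          simp only [Matrix.mul_assoc, hU.1, Matrix.mul_one]
          rw [← Matrix.mul_assoc, hV.1, Matrix.one_mul]
      _ = 0 := by rw [h0]; simp
  have hα0 : ∀ i, α i i = 0 := fun i => by
    have := congrFun (congrFun hα i) i
    simp [Matrix.transpose_apply] at this; linarith
  have hβ0 : ∀ i, β i i = 0 := fun i => by
    have := congrFun (congrFun hβ i) i
    simp [Matrix.transpose_apply] at this; linarith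
  have keyij : ∀ i j, α i j * Λ₀ j + (Matrix.diagonal μ) i j + Λ₀ i * β j i = 0 := by
    intro i j
    have := congrFun (congrFun key i) j
    simpa [Matrix.mul_diagonal, Matrix.diagonal_mul, Matrix.transpose_apply] using this
  have hsq : ∀ i j : Fin n, i ≠ j → Λ₀ j * Λ₀ j - Λ₀ i * Λ₀ i ≠ 0 := by
    intro i j hij h
    exact hdist i j hij (by nlinarith [hΛ i, hΛ j])
  have hαβ0 : ∀ i j, α i j = 0 ∧ β i j = 0 := by
    intro i j
    rcases eq_or_ne i j with rfl | hij
    · exact ⟨hα0 i, hβ0 i⟩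
    have e1 := keyij i j
    have e2 := keyij j i
    rw [Matrix.diagonal_apply_ne _ hij] at e1
    rw [Matrix.diagonal_apply_ne _ hij.symm] at e2
    have hba : β j i = -β i j := by
      have := congrFun (congrFun hβ i) j
      simp [Matrix.transpose_apply] at this; linarith
    have hab : α j i = -α i j := by
      have := congrFun (congrFun hα i) j
      simp [Matrix.transpose_apply] at this; linarith
    rw [hba] at e1
    rw [hab] at e2
    have hd := hsq i j hij
    constructor
    · have : (Λ₀ j * Λ₀ j - Λ₀ i * Λ₀ i) * α i j = 0 := by linear_combination Λ₀ j * e1 + Λ₀ i * e2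
      exact (mul_eq_zero.mp this).resolve_left hd
    · have : (Λ₀ j * Λ₀ j - Λ₀ i * Λ₀ i) * β i j = 0 := by linear_combination Λ₀ i * e1 + Λ₀ j * e2
      exact (mul_eq_zero.mp this).resolve_left hd
  have hαz : α = 0 := by ext i j; exact (hαβ0 i j).1
  have hβz : β = 0 := by ext i j; exact (hαβ0 i j).2
  have hμz : μ = 0 := by
    funext i
    have := keyij i i
    rw [Matrix.diagonal_apply_eq, hα0, hβ0] at this
    simpa using this
  refine Prod.ext ?_ (Prod.ext ?_ ?_)
  · show A = 0; rw [hA, hαz, Matrix.mul_zero]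
  · show B = 0; rw [hB, hβz, Matrix.mul_zero]
  · exact hμz

end ker
/-- Let `X₀ ∈ ℝ^{n×n}` have pairwise distinct singular values with SVD
`X₀ = V₀ diag(Λ₀) U₀ᵀ`. The partial differential `∂₂ψ(X₀, Y₀)` of
`ψ(X,(V,U,Λ)) = (X − V diag(Λ) Uᵀ, VᵀV − Id, UᵀU − Id)` in its second argument is
invertible on the subspace `ℝ^{n×n} × {0} × {0}`: every `(z₁, 0, 0)` has a unique
preimage, and for `ι_V, ι_U` the antisymmetric matrices solving, for `i ≠ j`, the 2×2
systems `[[Λ_j, −Λ_i], [−Λ_i, Λ_j]] ((ι_V)_{i,j}, (ι_U)_{i,j})ᵀ = (−z̄₁_{i,j}, −z̄₁_{j,i})ᵀ`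
with `z̄₁ = V₀ᵀ z₁ U₀`, the preimage is `(V₀ ι_V, U₀ ι_U, −diag(V₀ᵀ z₁ U₀))`. -/
theorem partial_diff_psi_invertible {n : ℕ}
    (X₀ V₀ : Matrix (Fin n) (Fin n) ℝ) (Λ₀ : Fin n → ℝ)
    (U₀ : Matrix (Fin n) (Fin n) ℝ)
    (hV : V₀ᵀ * V₀ = 1 ∧ V₀ * V₀ᵀ = 1) (hU : U₀ᵀ * U₀ = 1 ∧ U₀ * U₀ᵀ = 1)
    (hΛ : ∀ i, 0 ≤ Λ₀ i) (hX₀ : X₀ = V₀ * Matrix.diagonal Λ₀ * U₀ᵀ)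
    (hdist : ∀ i j : Fin n, i ≠ j → Λ₀ i ≠ Λ₀ j) :
    (∀ z₁ : Matrix (Fin n) (Fin n) ℝ,
        ∃! ζ : Matrix (Fin n) (Fin n) ℝ × Matrix (Fin n) (Fin n) ℝ × (Fin n → ℝ),
          fderiv ℝ (psiSVD X₀) (V₀, U₀, Λ₀) ζ = (z₁, 0, 0)) ∧
      ∀ z₁ : Matrix (Fin n) (Fin n) ℝ, ∀ ιV ιU : Matrix (Fin n) (Fin n) ℝ,
        ιVᵀ = -ιV → ιUᵀ = -ιU →
        (∀ i j : Fin n, i ≠ j →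
          Λ₀ j * ιV i j - Λ₀ i * ιU i j = -((V₀ᵀ * z₁ * U₀) i j) ∧
          -(Λ₀ i) * ιV i j + Λ₀ j * ιU i j = -((V₀ᵀ * z₁ * U₀) j i)) →
        fderiv ℝ (psiSVD X₀) (V₀, U₀, Λ₀)
            (V₀ * ιV, U₀ * ιU, fun i => -((V₀ᵀ * z₁ * U₀) i i)) = (z₁, 0, 0) := by
  have hd : ∀ i j : Fin n, i ≠ j → Λ₀ j ^ 2 - Λ₀ i ^ 2 ≠ 0 := by
    intro i j hij h
    exact hdist i j hij (by nlinarith [hΛ i, hΛ j])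
  constructor
  · intro z₁
    set z := V₀ᵀ * z₁ * U₀ with hz
    set ιV : M n := Matrix.of fun i j =>
      if i = j then 0 else -(Λ₀ j * z i j + Λ₀ i * z j i) / (Λ₀ j ^ 2 - Λ₀ i ^ 2) with hιVdef
    set ιU : M n := Matrix.of fun i j =>
      if i = j then 0 else -(Λ₀ i * z i j + Λ₀ j * z j i) / (Λ₀ j ^ 2 - Λ₀ i ^ 2) with hιUdef
    have hιV : ιVᵀ = -ιV := by
      ext i j
      rcases eq_or_ne i j with rfl | hij
      · simp [hιVdef]
      · simp only [Matrix.transpose_apply, Matrix.neg_apply, hιVdef, Matrix.of_apply,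
          if_neg hij.symm, if_neg hij]
        field_simp [hd i j hij, hd j i hij.symm]
        ring
    have hιU : ιUᵀ = -ιU := by
      ext i j
      rcases eq_or_ne i j with rfl | hij
      · simp [hιUdef]
      · simp only [Matrix.transpose_apply, Matrix.neg_apply, hιUdef, Matrix.of_apply,
          if_neg hij.symm, if_neg hij]
        field_simp [hd i j hij, hd j i hij.symm]
        ring
    have hsys : ∀ i j : Fin n, i ≠ j →
        Λ₀ j * ιV i j - Λ₀ i * ιU i j = -(z i j) ∧
        -(Λ₀ i) * ιV i j + Λ₀ j * ιU i j = -(z j i) := by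
      intro i j hij
      simp only [hιVdef, hιUdef, Matrix.of_apply, if_neg hij]
      constructor
      · field_simp [hd i j hij]
        ring
      · field_simp [hd i j hij]
        ring
    have hζ := forward_calc X₀ V₀ Λ₀ U₀ hV hU z₁ ιV ιU hιV hιU hsys
    refine ⟨(V₀ * ιV, U₀ * ιU, fun i => -((V₀ᵀ * z₁ * U₀) i i)), hζ, ?_⟩
    intro y hy
    have h0 : fderiv ℝ (psiSVD X₀) (V₀, U₀, Λ₀)
        (y - (V₀ * ιV, U₀ * ιU, fun i => -((V₀ᵀ * z₁ * U₀) i i))) = 0 := by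
      rw [map_sub, hy, hζ, sub_self]
    exact sub_eq_zero.mp (ker_triv X₀ V₀ Λ₀ U₀ hV hU hΛ hdist _ h0)
  · intro z₁ ιV ιU hιV hιU hsys
    exact forward_calc X₀ V₀ Λ₀ U₀ hV hU z₁ ιV ιU hιV hιU hsys
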